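/- If f is a symmetric norm on ℝⁿ, then A ↦ f(λ₁(A),…,λₙ(A)) defines a norm on the real vector space of n×n complex Hermitian matrices; in particular it satisfies the triangle inequality. -/

import Mathlib

open Matrix Finset

section Aux

variable {n : ℕ}

lemma aux_sum_smul_le (f : (Fin n → ℝ) → ℝ) (h0 : f 0 = 0)
    (hhom : ∀ (c : ℝ) x, f (c • x) = |c| * f x)
    (htri : ∀ x y, f (x + y) ≤ f x + f y)
    {ι : Type*} (s : Finset ι) (w : ι → ℝ) (v : ι → Fin n → ℝ)
    (hw : ∀ i ∈ s, 0 ≤ w i) :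
    f (∑ i ∈ s, w i • v i) ≤ ∑ i ∈ s, w i * f (v i) := by
  induction s using Finset.cons_induction with
  | empty => simp [h0]
  | cons a s ha ih =>
    rw [Finset.sum_cons, Finset.sum_cons]
    refine (htri _ _).trans ?_
    rw [hhom (w a) (v a), abs_of_nonneg (hw a (Finset.mem_cons_self ..))]
    exact add_le_add le_rfl (ih fun i hi => hw i (Finset.mem_cons.2 (Or.inr hi)))

lemma aux_mulVec_le (f : (Fin n → ℝ) → ℝ) (h0 : f 0 = 0)
    (hhom : ∀ (c : ℝ) x, f (c • x) = |c| * f x)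
    (htri : ∀ x y, f (x + y) ≤ f x + f y)
    (hsym : ∀ (σ : Equiv.Perm (Fin n)) x, f (x ∘ σ) = f x)
    (P : Matrix (Fin n) (Fin n) ℝ) (hP : P ∈ doublyStochastic ℝ (Fin n))
    (x : Fin n → ℝ) : f (P *ᵥ x) ≤ f x := by
  obtain ⟨w, hw0, hw1, hw2⟩ := exists_eq_sum_perm_of_mem_doublyStochastic hP
  have hPx : P *ᵥ x = ∑ σ : Equiv.Perm (Fin n), w σ • (x ∘ σ) := by
    rw [← hw2]
    ext i
    simp only [mulVec, dotProduct, Finset.sum_apply, Finset.sum_apply', Pi.smul_apply,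
      Matrix.sum_apply, Matrix.smul_apply, smul_eq_mul, Finset.sum_mul, Function.comp_apply]
    rw [Finset.sum_comm]
    refine Finset.sum_congr rfl fun σ _ => ?_
    simp only [Equiv.Perm.permMatrix, PEquiv.toMatrix_apply, Equiv.toPEquiv_apply,
      Option.mem_def, Option.some.injEq, mul_ite, mul_one, mul_zero, ite_mul, zero_mul]
    rw [Finset.sum_eq_single (σ i)] <;> simp +contextual [eq_comm]
  rw [hPx]
  calc f (∑ σ : Equiv.Perm (Fin n), w σ • (x ∘ σ))
      ≤ ∑ σ : Equiv.Perm (Fin n), w σ * f (x ∘ σ) :=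
        aux_sum_smul_le f h0 hhom htri _ _ _ fun i _ => hw0 i
    _ = ∑ σ : Equiv.Perm (Fin n), w σ * f x := by
        refine Finset.sum_congr rfl fun σ _ => by rw [hsym]
    _ = f x := by rw [← Finset.sum_mul, hw1, one_mul]

lemma aux_diag_mix (A : Matrix (Fin n) (Fin n) ℂ) (hA : A.IsHermitian)
    (U : Matrix.unitaryGroup (Fin n) ℂ) :
    ∃ P ∈ doublyStochastic ℝ (Fin n),
      (fun i => ((star (U : Matrix (Fin n) (Fin n) ℂ) * A * U) i i).re)
        = P *ᵥ hA.eigenvalues := by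
  set Vm : Matrix (Fin n) (Fin n) ℂ := (hA.eigenvectorUnitary : Matrix (Fin n) (Fin n) ℂ)
    with hVm
  set M : Matrix (Fin n) (Fin n) ℂ := star Vm * (U : Matrix (Fin n) (Fin n) ℂ) with hMdef
  have hMmem : M ∈ Matrix.unitaryGroup (Fin n) ℂ :=
    mul_mem (Unitary.star_mem hA.eigenvectorUnitary.2) U.2
  have hMstar : star M * M = 1 := mem_unitaryGroup_iff'.mp hMmem
  have hMself : M * star M = 1 := mem_unitaryGroup_iff.mp hMmem
  refine ⟨fun i j => Complex.normSq (M j i), ?_, ?_⟩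
  · refine mem_doublyStochastic_iff_sum.2 ?_
    refine ⟨fun i j => Complex.normSq_nonneg _, fun i => ?_, fun j => ?_⟩
    · have h1 := congrFun (congrFun hMstar i) i
      simp only [Matrix.mul_apply, Matrix.one_apply_eq, Matrix.star_apply] at h1
      have h2 : (∑ j, ((Complex.normSq (M j i) : ℂ))) = 1 := by
        rw [← h1]
        refine Finset.sum_congr rfl fun j _ => ?_
        simp [RCLike.star_def, Complex.normSq_eq_conj_mul_self]
      exact_mod_cast h2
    · have h1 := congrFun (congrFun hMself j) j
      simp only [Matrix.mul_apply, Matrix.one_apply_eq, Matrix.star_apply] at h1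
      have h2 : (∑ i, ((Complex.normSq (M j i) : ℂ))) = 1 := by
        rw [← h1]
        refine Finset.sum_congr rfl fun i _ => ?_
        simp [RCLike.star_def, Complex.normSq_eq_conj_mul_self, mul_comm]
      exact_mod_cast h2
  · funext i
    have hspec : star (U : Matrix (Fin n) (Fin n) ℂ) * A * (U : Matrix (Fin n) (Fin n) ℂ)
        = star M * diagonal (RCLike.ofReal ∘ hA.eigenvalues) * M := by
      conv_lhs => rw [hA.spectral_theorem, Unitary.conjStarAlgAut_apply]
      rw [hMdef]
      simp only [StarMul.star_mul, star_star]
      noncomm_ring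
    simp only [mulVec]
    simp only [dotProduct]
    rw [hspec]
    have hentry : (star M * diagonal ((RCLike.ofReal : ℝ → ℂ) ∘ hA.eigenvalues) * M) i i
        = ∑ j, ((hA.eigenvalues j : ℂ) * Complex.normSq (M j i)) := by
      rw [Matrix.mul_apply]
      refine Finset.sum_congr rfl fun j _ => ?_
      rw [Matrix.mul_apply, Finset.sum_eq_single j]
      · simp only [Matrix.star_apply, diagonal_apply_eq, Function.comp_apply]
        simp [RCLike.star_def, Complex.normSq_eq_conj_mul_self]
        ring
      · intro b _ hb; simp [diagonal_apply_ne _ hb]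
      · simp
    rw [hentry]
    rw [Complex.re_sum]
    refine Finset.sum_congr rfl fun j _ => ?_
    simp [mul_comm]

end Aux

section Main

variable {n : ℕ}

lemma aux_eigform (A : Matrix (Fin n) (Fin n) ℂ) (hA : A.IsHermitian) :
    hA.eigenvalues = fun i =>
      ((star (hA.eigenvectorUnitary : Matrix (Fin n) (Fin n) ℂ) * A
        * (hA.eigenvectorUnitary : Matrix (Fin n) (Fin n) ℂ)) i i).re := by
  funext i
  rw [← Unitary.conjStarAlgAut_star_apply (S := ℂ), hA.conjStarAlgAut_star_eigenvectorUnitary]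
  simp

end Main




/-- If `f` is a symmetric norm on `ℝⁿ`, then `A ↦ f(λ(A))` is a norm on the
Hermitian `n × n` matrices. -/
theorem symmetric_norm_eigenvalues_is_norm (n : ℕ) (f : (Fin n → ℝ) → ℝ)
    (hnonneg : ∀ x, 0 ≤ f x) (hdef : ∀ x, f x = 0 ↔ x = 0)
    (hhom : ∀ (c : ℝ) x, f (c • x) = |c| * f x)
    (htri : ∀ x y, f (x + y) ≤ f x + f y)
    (hsym : ∀ (σ : Equiv.Perm (Fin n)) x, f (x ∘ σ) = f x) :
    (∀ (A : Matrix (Fin n) (Fin n) ℂ) (hA : A.IsHermitian), 0 ≤ f hA.eigenvalues) ∧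
    (∀ (A : Matrix (Fin n) (Fin n) ℂ) (hA : A.IsHermitian),
      (f hA.eigenvalues = 0 ↔ A = 0)) ∧
    (∀ (c : ℝ) (A : Matrix (Fin n) (Fin n) ℂ) (hA : A.IsHermitian)
      (hcA : ((c : ℂ) • A).IsHermitian), f hcA.eigenvalues = |c| * f hA.eigenvalues) ∧
    (∀ (A B : Matrix (Fin n) (Fin n) ℂ) (hA : A.IsHermitian) (hB : B.IsHermitian)
      (hAB : (A + B).IsHermitian),
      f hAB.eigenvalues ≤ f hA.eigenvalues + f hB.eigenvalues) := by
  have h0 : f 0 = 0 := (hdef 0).mpr rfl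
  have key : ∀ (A : Matrix (Fin n) (Fin n) ℂ) (hA : A.IsHermitian)
      (U : Matrix.unitaryGroup (Fin n) ℂ),
      f (fun i => ((star (U : Matrix (Fin n) (Fin n) ℂ) * A
        * (U : Matrix (Fin n) (Fin n) ℂ)) i i).re) ≤ f hA.eigenvalues := by
    intro A hA U
    obtain ⟨P, hP, hPe⟩ := aux_diag_mix A hA U
    rw [hPe]
    exact aux_mulVec_le f h0 hhom htri hsym P hP _
  refine ⟨fun A hA => hnonneg _, ?_, ?_, ?_⟩
  · intro A hA
    rw [hdef]
    constructor
    · intro h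
      conv_lhs => rw [hA.spectral_theorem]
      rw [h]
      simp [Function.comp_def]
    · rintro rfl
      rw [aux_eigform 0 hA]
      funext i
      simp
  · intro c A hA hcA
    rcases eq_or_ne c 0 with rfl | hc
    · have hz : hcA.eigenvalues = 0 := by
        rw [aux_eigform _ hcA]
        funext i
        simp
      rw [hz, h0]
      simp
    · have habs : (0:ℝ) < |c| := abs_pos.mpr hc
      have hfle : f hcA.eigenvalues ≤ |c| * f hA.eigenvalues := by
        have hsm : hcA.eigenvalues = c • (fun i =>
            ((star (hcA.eigenvectorUnitary : Matrix (Fin n) (Fin n) ℂ) * A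
              * (hcA.eigenvectorUnitary : Matrix (Fin n) (Fin n) ℂ)) i i).re) := by
          rw [aux_eigform _ hcA]
          funext i
          simp [Matrix.mul_smul, Matrix.smul_mul]
        rw [hsm, hhom]
        exact mul_le_mul_of_nonneg_left (key A hA _) (abs_nonneg c)
      have hgle : f hA.eigenvalues ≤ |c|⁻¹ * f hcA.eigenvalues := by
        have hsm : hA.eigenvalues = c⁻¹ • (fun i =>
            ((star (hA.eigenvectorUnitary : Matrix (Fin n) (Fin n) ℂ) * ((c : ℂ) • A)
              * (hA.eigenvectorUnitary : Matrix (Fin n) (Fin n) ℂ)) i i).re) := by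
          rw [aux_eigform _ hA]
          funext i
          simp [Matrix.mul_smul, Matrix.smul_mul]
          field_simp
        rw [hsm, hhom, abs_inv]
        exact mul_le_mul_of_nonneg_left (key ((c : ℂ) • A) hcA _) (by positivity)
      refine le_antisymm hfle ?_
      calc |c| * f hA.eigenvalues ≤ |c| * (|c|⁻¹ * f hcA.eigenvalues) :=
            mul_le_mul_of_nonneg_left hgle habs.le
        _ = f hcA.eigenvalues := by field_simp
  · intro A B hA hB hAB
    have hsplit : hAB.eigenvalues =
        (fun i => ((star (hAB.eigenvectorUnitary : Matrix (Fin n) (Fin n) ℂ) * A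
          * (hAB.eigenvectorUnitary : Matrix (Fin n) (Fin n) ℂ)) i i).re)
        + (fun i => ((star (hAB.eigenvectorUnitary : Matrix (Fin n) (Fin n) ℂ) * B
          * (hAB.eigenvectorUnitary : Matrix (Fin n) (Fin n) ℂ)) i i).re) := by
      rw [aux_eigform _ hAB]
      funext i
      simp [Matrix.mul_add, Matrix.add_mul]
    rw [hsplit]
    exact (htri _ _).trans (add_le_add (key A hA _) (key B hB _))
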